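/- Let w_1, …, w_m be linearly independent linear forms in B with span W, fix j ∈ {1,…,m}, let W_j be the span of {w_1,…,w_m} \ {w_j}, and let S be a system of line representatives for W. Then there exists a nonzero scalar λ ∈ 𝔽_p such that det M(w_1,…,w_m) = λ · (∏_{w ∈ S, w ∉ W_j} w) · det M(w_1,…,ŵ_j,…,w_m), where the second determinant is that of the (m−1)×(m−1) matrix built from the linear forms with w_j omitted and exponents p^0, …, p^(m−2). -/

import Mathlib

open MvPolynomial

/-- The linear form `Σ_i v_i X_i` in `B = (ZMod p)[X_1, …, X_m]` associated to a
coefficient vector `v : Fin m → ZMod p`. -/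
noncomputable def linForm (p m : ℕ) (v : Fin m → ZMod p) :
    MvPolynomial (Fin m) (ZMod p) :=
  ∑ i : Fin m, MvPolynomial.C (v i) * MvPolynomial.X i

/-- A system of line representatives for a subspace `W` of an `𝔽_p`-module:
a finite set of nonzero elements of `W` such that every nonzero element of `W`
is a scalar multiple of exactly one element of the set. -/
def IsLineReps {p : ℕ} {M : Type*} [AddCommGroup M] [Module (ZMod p) M]
    (W : Submodule (ZMod p) M) (S : Finset M) : Prop :=
  (∀ w ∈ S, w ∈ W ∧ w ≠ 0) ∧
    ∀ w ∈ W, w ≠ 0 → ∃! u, u ∈ S ∧ ∃ c : ZMod p, w = c • u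

open scoped Classical in
/-- with `m = n + 1 ≥ 2`, `W_j` the span of the `w_i` with `i ≠ j` and `S`
a system of line representatives for `W = span{w_1,…,w_m}`, there is a nonzero `λ ∈ 𝔽_p`
with `det M(w_1,…,w_m) = λ · (∏_{w ∈ S, w ∉ W_j} w) · det M(w_1,…,ŵ_j,…,w_m)`. -/
theorem stmt5 (p n : ℕ) [Fact p.Prime] (hn : 1 ≤ n)
    (v : Fin (n + 1) → Fin (n + 1) → ZMod p)
    (hind : LinearIndependent (ZMod p) (fun j => linForm p (n + 1) (v j)))
    (j : Fin (n + 1))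
    (S : Finset (MvPolynomial (Fin (n + 1)) (ZMod p)))
    (hS : IsLineReps
      (Submodule.span (ZMod p) (Set.range fun i => linForm p (n + 1) (v i))) S) :
    ∃ lam : ZMod p, lam ≠ 0 ∧
      Matrix.det (Matrix.of fun i' j' : Fin (n + 1) =>
          (linForm p (n + 1) (v j')) ^ p ^ (i' : ℕ)) =
        MvPolynomial.C lam *
          (∏ w ∈ S.filter (fun w =>
            w ∉ Submodule.span (ZMod p)
              (Set.range fun j' : Fin n => linForm p (n + 1) (v (j.succAbove j')))), w) *
          Matrix.det (Matrix.of fun i' j' : Fin n =>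
            (linForm p (n + 1) (v (j.succAbove j'))) ^ p ^ (i' : ℕ)) := by
  have hp : p.Prime := Fact.out
  haveI : Fact (1 < p) := ⟨hp.one_lt⟩
  set w : Fin (n + 1) → MvPolynomial (Fin (n + 1)) (ZMod p) :=
    fun i => linForm p (n + 1) (v i) with hw
  simp only [show ∀ i, linForm p (n + 1) (v i) = w i from fun _ => rfl]
  set Wj : Submodule (ZMod p) (MvPolynomial (Fin (n + 1)) (ZMod p)) :=
    Submodule.span (ZMod p) (Set.range fun j' : Fin n => w (j.succAbove j')) with hWj
  set M : Matrix (Fin (n + 1)) (Fin (n + 1)) (MvPolynomial (Fin (n + 1)) (ZMod p)) :=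
    Matrix.of fun i' j' => (w j') ^ p ^ (i' : ℕ) with hM
  -- Frobenius facts
  have hfrob : ∀ (r : ℕ) (c : ZMod p) (x : MvPolynomial (Fin (n + 1)) (ZMod p)),
      (c • x) ^ p ^ r = C c * x ^ p ^ r := by
    intro r c x
    rw [smul_pow, ZMod.pow_card_pow, smul_eq_C_mul]
  -- vanishing of detereminant with column j replaced by powers of u ∈ Wj
  have hvan : ∀ u ∈ Wj,
      (M.updateCol j fun i : Fin (n + 1) => u ^ p ^ (i : ℕ)).det = 0 := by
    intro u hu
    obtain ⟨c, hc⟩ := (Submodule.mem_span_range_iff_exists_fun _).1 hu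
    set c' : Fin (n + 1) → MvPolynomial (Fin (n + 1)) (ZMod p) :=
      fun l => ∑ k : Fin n, if j.succAbove k = l then C (c k) else 0 with hc'
    have hcj : c' j = 0 :=
      Finset.sum_eq_zero fun k _ => if_neg (Fin.succAbove_ne j k)
    have hcol : (fun i : Fin (n + 1) => u ^ p ^ (i : ℕ))
        = fun i => ∑ l, c' l • M i l := by
      funext i
      rw [← hc, sum_pow_char_pow p (i : ℕ)]
      rw [Finset.sum_congr rfl (fun k _ => hfrob (i : ℕ) (c k) (w (j.succAbove k)))]
      symm
      calc ∑ l, c' l • M i l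
          = ∑ l, ∑ k : Fin n, (if j.succAbove k = l then C (c k) * M i l else 0) := by
            refine Finset.sum_congr rfl fun l _ => ?_
            rw [hc', Finset.sum_smul]
            refine Finset.sum_congr rfl fun k _ => ?_
            split_ifs <;> simp
        _ = ∑ k : Fin n, ∑ l, (if j.succAbove k = l then C (c k) * M i l else 0) :=
            Finset.sum_comm
        _ = ∑ k : Fin n, C (c k) * M i (j.succAbove k) := by
            refine Finset.sum_congr rfl fun k _ => ?_
            simp
        _ = ∑ k : Fin n, C (c k) * (w (j.succAbove k)) ^ p ^ (i : ℕ) := rfl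
    rw [hcol, Matrix.det_updateCol_sum, hcj, zero_smul]
  -- the auxiliary polynomial F with eval y F = det of M with column j replaced
  set minor : Fin (n + 1) → MvPolynomial (Fin (n + 1)) (ZMod p) :=
    fun i => (M.submatrix i.succAbove j.succAbove).det with hminor
  set F : Polynomial (MvPolynomial (Fin (n + 1)) (ZMod p)) :=
    ∑ i : Fin (n + 1), Polynomial.C ((-1) ^ ((i : ℕ) + (j : ℕ)) * minor i) *
      Polynomial.X ^ p ^ (i : ℕ) with hF
  have hevalF : ∀ y, F.eval y
      = (M.updateCol j fun i : Fin (n + 1) => y ^ p ^ (i : ℕ)).det := by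
    intro y
    rw [Matrix.det_succ_column _ j, hF, Polynomial.eval_finset_sum]
    refine Finset.sum_congr rfl fun i _ => ?_
    have hsub : ((M.updateCol j fun i : Fin (n + 1) =>
          y ^ p ^ (i : ℕ)).submatrix i.succAbove j.succAbove)
        = M.submatrix i.succAbove j.succAbove := by
      ext i'' j''
      simp [Matrix.updateCol_apply, Fin.succAbove_ne j j'']
    rw [hsub]
    simp only [Polynomial.eval_mul, Polynomial.eval_pow, Polynomial.eval_C,
      Polynomial.eval_X, Matrix.updateCol_self]
    ring
  have hdetM : M.det = F.eval (w j) := by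
    rw [hevalF]
    congr 1
    exact (Matrix.updateCol_eq_self M j).symm
  -- the finite set of elements of Wj
  have hindW : LinearIndependent (ZMod p) fun k : Fin n => w (j.succAbove k) :=
    hind.comp j.succAbove Fin.succAbove_right_injective
  set toW : (Fin n → ZMod p) → MvPolynomial (Fin (n + 1)) (ZMod p) :=
    fun c => ∑ k, c k • w (j.succAbove k) with htoW
  have htoWinj : Function.Injective toW := by
    intro c d hcd
    have h0 : ∑ k, (c - d) k • w (j.succAbove k) = 0 := by
      simp only [Pi.sub_apply, sub_smul, Finset.sum_sub_distrib]
      rw [show (∑ k, c k • w (j.succAbove k)) = toW c from rfl,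
        show (∑ k, d k • w (j.succAbove k)) = toW d from rfl, hcd, sub_self]
    funext k
    have := Fintype.linearIndependent_iff.mp hindW (c - d) h0 k
    simpa [sub_eq_zero] using this
  set Wfin : Finset (MvPolynomial (Fin (n + 1)) (ZMod p)) :=
    Finset.image toW Finset.univ with hWfin
  have hmemW : ∀ x, x ∈ Wfin ↔ x ∈ Wj := by
    intro x
    rw [hWfin, Finset.mem_image]
    constructor
    · rintro ⟨c, -, rfl⟩
      exact Submodule.sum_mem _ fun k _ =>
        Submodule.smul_mem _ _ (Submodule.subset_span ⟨k, rfl⟩)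
    · intro hx
      obtain ⟨c, hc⟩ := (Submodule.mem_span_range_iff_exists_fun _).1 hx
      exact ⟨c, Finset.mem_univ _, hc⟩
  have hcard : Wfin.card = p ^ n := by
    rw [hWfin, Finset.card_image_of_injective _ htoWinj, Finset.card_univ]
    simp [ZMod.card]
  -- the polynomial Q
  set Q : Polynomial (MvPolynomial (Fin (n + 1)) (ZMod p)) :=
    ∏ u ∈ Wfin, (Polynomial.X - Polynomial.C u) with hQ
  have hQmonic : Q.Monic :=
    Polynomial.monic_prod_of_monic _ _ fun u _ => Polynomial.monic_X_sub_C u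
  have hQdeg : Q.natDegree = p ^ n := by
    rw [hQ, Polynomial.natDegree_prod _ _ (fun u _ => Polynomial.X_sub_C_ne_zero u)]
    simp [hcard]
  set A : MvPolynomial (Fin (n + 1)) (ZMod p) :=
    (-1) ^ (n + (j : ℕ)) * minor (Fin.last n) with hA
  set G : Polynomial (MvPolynomial (Fin (n + 1)) (ZMod p)) :=
    F - Polynomial.C A * Q with hG
  have hdegG : G.degree < ((p ^ n : ℕ) : WithBot ℕ) := by
    have hGeq : G = (∑ i : Fin n,
        Polynomial.C ((-1) ^ (((i.castSucc : Fin (n+1)) : ℕ) + (j : ℕ)) * minor i.castSucc) *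
          Polynomial.X ^ p ^ ((i.castSucc : Fin (n+1)) : ℕ))
        - Polynomial.C A * (Q - Polynomial.X ^ p ^ n) := by
      rw [hG, hF, Fin.sum_univ_castSucc, hA]
      simp only [Fin.val_last, map_mul, map_pow, map_neg, map_one]
      ring
    rw [hGeq]
    have h1 : (∑ i : Fin n,
        Polynomial.C ((-1) ^ (((i.castSucc : Fin (n+1)) : ℕ) + (j : ℕ)) * minor i.castSucc) *
          Polynomial.X ^ p ^ ((i.castSucc : Fin (n+1)) : ℕ)).degree
        < ((p ^ n : ℕ) : WithBot ℕ) := by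
      refine lt_of_le_of_lt (Polynomial.degree_sum_le _ _) ?_
      rw [Finset.sup_lt_iff (by exact_mod_cast WithBot.bot_lt_coe (p ^ n))]
      intro i _
      refine lt_of_le_of_lt (Polynomial.degree_C_mul_X_pow_le _ _) ?_
      exact_mod_cast Nat.pow_lt_pow_right hp.one_lt (by simpa using i.isLt)
    have h2 : (Polynomial.C A * (Q - Polynomial.X ^ p ^ n)).degree
        < ((p ^ n : ℕ) : WithBot ℕ) := by
      have hQne : Q ≠ 0 := hQmonic.ne_zero
      have hQd : Q.degree = ((p ^ n : ℕ) : WithBot ℕ) := by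
        rw [Polynomial.degree_eq_natDegree hQne, hQdeg]
      have hsub : (Q - Polynomial.X ^ p ^ n).degree < ((p ^ n : ℕ) : WithBot ℕ) := by
        have hd : Q.degree = (Polynomial.X ^ p ^ n :
            Polynomial (MvPolynomial (Fin (n + 1)) (ZMod p))).degree := by
          rw [hQd, Polynomial.degree_X_pow]
        have hl : Q.leadingCoeff = (Polynomial.X ^ p ^ n :
            Polynomial (MvPolynomial (Fin (n + 1)) (ZMod p))).leadingCoeff := by
          rw [hQmonic.leadingCoeff, Polynomial.leadingCoeff_X_pow]
        have := Polynomial.degree_sub_lt hd hQne hl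
        rwa [hQd] at this
      refine lt_of_le_of_lt (Polynomial.degree_mul_le _ _) ?_
      calc (Polynomial.C A).degree + (Q - Polynomial.X ^ p ^ n).degree
          ≤ 0 + (Q - Polynomial.X ^ p ^ n).degree := by
            exact add_le_add Polynomial.degree_C_le le_rfl
        _ = (Q - Polynomial.X ^ p ^ n).degree := zero_add _
        _ < _ := hsub
    exact lt_of_le_of_lt (Polynomial.degree_sub_le _ _) (max_lt h1 h2)
  have hG0 : G = 0 := by
    by_cases hGz : G = 0
    · exact hGz
    refine Polynomial.eq_zero_of_natDegree_lt_card_of_eval_eq_zero' G Wfin ?_ ?_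
    · intro u hu
      have h1 : F.eval u = 0 := by
        rw [hevalF]; exact hvan u ((hmemW u).1 hu)
      have h2 : Q.eval u = 0 := by
        rw [hQ, Polynomial.eval_prod]
        exact Finset.prod_eq_zero hu (by simp)
      rw [hG, Polynomial.eval_sub, Polynomial.eval_mul, Polynomial.eval_C, h1, h2,
        mul_zero, sub_zero]
    · rw [hcard]
      exact (Polynomial.natDegree_lt_iff_degree_lt hGz).2 hdegG
  have hFQ : F = Polynomial.C A * Q := by rwa [sub_eq_zero] at hG0
  -- w j is not in Wj
  have hwjWj : w j ∉ Wj := by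
    have himg : (Set.range fun j' : Fin n => w (j.succAbove j'))
        = w '' Set.range j.succAbove := by
      rw [← Set.range_comp]; rfl
    rw [hWj, himg]
    refine hind.notMem_span_image ?_
    rintro ⟨k, hk⟩
    exact Fin.succAbove_ne j k hk
  have hWle : Wj ≤ Submodule.span (ZMod p) (Set.range w) := by
    rw [hWj]
    refine Submodule.span_le.2 ?_
    rintro x ⟨k, rfl⟩
    exact Submodule.subset_span ⟨j.succAbove k, rfl⟩
  have hsubW : ∀ u ∈ Wfin, w j - u ∉ Wj := by
    intro u hu h
    have h2 := Wj.add_mem h ((hmemW u).1 hu)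
    rw [sub_add_cancel] at h2
    exact hwjWj h2
  have hbig : ∀ u ∈ Wfin, ∃ s, ∃ c : ZMod p, s ∈ S ∧ s ∉ Wj ∧
      c ≠ 0 ∧ w j - u = c • s ∧
      ∀ y, (y ∈ S ∧ ∃ c' : ZMod p, w j - u = c' • y) → y = s := by
    intro u hu
    have hne : w j - u ≠ 0 := fun h0 => hsubW u hu (h0 ▸ Wj.zero_mem)
    obtain ⟨s, ⟨hsS, c, hceq⟩, huniq⟩ := hS.2 (w j - u)
      (Submodule.sub_mem _ (Submodule.subset_span ⟨j, rfl⟩)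
        (hWle ((hmemW u).1 hu))) hne
    have hcne : c ≠ 0 := by
      intro h0
      rw [h0, zero_smul] at hceq
      exact hne hceq
    have hsW : s ∉ Wj := by
      intro h
      exact hsubW u hu (by rw [hceq]; exact Wj.smul_mem _ h)
    exact ⟨s, c, hsS, hsW, hcne, hceq, huniq⟩
  choose! e cc heS heWj hccne hcceq heuniq using hbig
  set filt : Finset (MvPolynomial (Fin (n + 1)) (ZMod p)) :=
    S.filter (fun s => s ∉ Wj) with hfilt
  have hefilt : ∀ u ∈ Wfin, e u ∈ filt := by
    intro u hu
    rw [hfilt, Finset.mem_filter]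
    exact ⟨heS u hu, heWj u hu⟩
  have heinj : ∀ u₁ ∈ Wfin, ∀ u₂ ∈ Wfin, e u₁ = e u₂ → u₁ = u₂ := by
    intro u₁ h₁ u₂ h₂ hee
    have e1 := hcceq u₁ h₁
    have e2 := hcceq u₂ h₂
    rw [hee] at e1
    by_cases hc : cc u₁ = cc u₂
    · rw [hc] at e1
      have h3 : w j - u₁ = w j - u₂ := e1.trans e2.symm
      have h4 := congrArg (fun t => w j - t) h3
      simpa [sub_sub_cancel] using h4
    · exfalso
      apply heWj u₂ h₂
      have hdiff : u₂ - u₁ = (cc u₁ - cc u₂) • e u₂ := by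
        rw [sub_smul, ← e1, ← e2]
        ring
      have hmem : u₂ - u₁ ∈ Wj := Wj.sub_mem ((hmemW u₂).1 h₂) ((hmemW u₁).1 h₁)
      have h5 : e u₂ = (cc u₁ - cc u₂)⁻¹ • (u₂ - u₁) := by
        rw [hdiff, smul_smul, inv_mul_cancel₀ (sub_ne_zero.2 hc), one_smul]
      rw [h5]
      exact Wj.smul_mem _ hmem
  have hesurj : ∀ s ∈ filt, ∃ u ∈ Wfin, e u = s := by
    intro s hs
    rw [hfilt, Finset.mem_filter] at hs
    obtain ⟨hsS, hsW⟩ := hs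
    obtain ⟨hsspan, hsne⟩ := hS.1 s hsS
    obtain ⟨a, ha⟩ := (Submodule.mem_span_range_iff_exists_fun _).1 hsspan
    rw [Fin.sum_univ_succAbove _ j] at ha
    set r : MvPolynomial (Fin (n + 1)) (ZMod p) :=
      ∑ k : Fin n, a (j.succAbove k) • w (j.succAbove k) with hr
    have hrW : r ∈ Wj := Submodule.sum_mem _ fun k _ =>
      Submodule.smul_mem _ _ (Submodule.subset_span ⟨k, rfl⟩)
    have haj : a j ≠ 0 := by
      intro h0
      apply hsW
      rw [h0, zero_smul, zero_add] at ha
      rw [← ha]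
      exact hrW
    have hu : w j - (a j)⁻¹ • s ∈ Wj := by
      have h6 : w j - (a j)⁻¹ • s = -((a j)⁻¹ • r) := by
        rw [← ha, smul_add, smul_smul, inv_mul_cancel₀ haj, one_smul]
        abel
      rw [h6]
      exact Wj.neg_mem (Wj.smul_mem _ hrW)
    have huWfin : w j - (a j)⁻¹ • s ∈ Wfin := (hmemW _).2 hu
    refine ⟨_, huWfin, ?_⟩
    symm
    refine heuniq _ huWfin s ⟨hsS, ⟨(a j)⁻¹, ?_⟩⟩
    rw [sub_sub_cancel]
  set lam0 : ZMod p := ∏ u ∈ Wfin, cc u with hlam0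
  have hlam0ne : lam0 ≠ 0 := by
    rw [hlam0]
    exact Finset.prod_ne_zero_iff.2 fun u hu => hccne u hu
  have hprodW : ∏ u ∈ Wfin, (w j - u) = C lam0 * ∏ s ∈ filt, s := by
    calc ∏ u ∈ Wfin, (w j - u)
        = ∏ u ∈ Wfin, (C (cc u) * e u) := by
          refine Finset.prod_congr rfl fun u hu => ?_
          rw [← smul_eq_C_mul, ← hcceq u hu]
      _ = (∏ u ∈ Wfin, C (cc u)) * ∏ u ∈ Wfin, e u :=
          Finset.prod_mul_distrib
      _ = C lam0 * ∏ s ∈ filt, s := by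
          rw [hlam0, map_prod]
          congr 1
          refine Finset.prod_bij (fun u _ => e u) ?_ ?_ ?_ ?_
          · intro u hu; exact hefilt u hu
          · intro u₁ h₁ u₂ h₂ h; exact heinj u₁ h₁ u₂ h₂ h
          · intro s hs
            obtain ⟨u, hu, heq⟩ := hesurj s hs
            exact ⟨u, hu, heq⟩
          · intro u _; rfl
  have hminorlast : minor (Fin.last n)
      = (Matrix.of fun i' j' : Fin n => (w (j.succAbove j')) ^ p ^ (i' : ℕ)).det := by
    show (M.submatrix (Fin.last n).succAbove j.succAbove).det = _
    congr 1
    ext i'' j''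
    simp [hM, Fin.succAbove_last]
  refine ⟨(-1) ^ (n + (j : ℕ)) * lam0,
    mul_ne_zero (pow_ne_zero _ (neg_ne_zero.2 one_ne_zero)) hlam0ne, ?_⟩
  calc M.det = F.eval (w j) := hdetM
    _ = A * Q.eval (w j) := by rw [hFQ, Polynomial.eval_mul, Polynomial.eval_C]
    _ = A * ∏ u ∈ Wfin, (w j - u) := by
        rw [hQ, Polynomial.eval_prod]
        simp
    _ = _ := by
        rw [hprodW, hA, hminorlast]
        simp only [map_mul, map_pow, map_neg, map_one]
        ring
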